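/- A nonempty finite intersection of quasi-Frank-and-Wolfe sets is a quasi-Frank-and-Wolfe set. -/

import Mathlib

open Pointwise Filter Topology
open scoped RealInnerProductSpace

noncomputable section

/-- A quadratic function on a real vector space. -/
def IsQuadratic {E : Type*} [AddCommGroup E] [Module ℝ E] (f : E → ℝ) : Prop :=
  ∃ (B : E →ₗ[ℝ] E →ₗ[ℝ] ℝ) (l : E →ₗ[ℝ] ℝ) (c : ℝ), ∀ x, f x = B x x + l x + c

/-- A quasi-Frank-and-Wolfe set: a convex set on which every quadratic function
which is quasi-convex on the set and bounded below attains its infimum. -/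
def IsQFWSet {E : Type*} [AddCommGroup E] [Module ℝ E] (F : Set E) : Prop :=
  Convex ℝ F ∧ ∀ f : E → ℝ, IsQuadratic f →
    (∀ α : ℝ, Convex ℝ {x ∈ F | f x ≤ α}) → BddBelow (f '' F) →
    ∃ x₀ ∈ F, ∀ x ∈ F, f x₀ ≤ f x

namespace QFWAux
set_option linter.unusedSectionVars false
set_option maxHeartbeats 1000000

variable {E : Type*} [NormedAddCommGroup E] [InnerProductSpace ℝ E] [FiniteDimensional ℝ E]



/-- `F` has an asymptote relative to the subspace `W`: there is an affine flat
`a + U` inside `W`, disjoint from `F`, at zero distance from `F`. -/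
def HasAsymp (W : Submodule ℝ E) (F : Set E) : Prop :=
  ∃ (a : E) (U : Submodule ℝ E) (x b : ℕ → E),
    a ∈ W ∧ U ≤ W ∧
    (∀ z ∈ F, ∀ v ∈ U, z ≠ a + v) ∧
    (∀ k, x k ∈ F) ∧ (∀ k, ∃ v ∈ U, b k = a + v) ∧
    Tendsto (fun k => ‖x k - b k‖) atTop (𝓝 0)

/-- a set with no asymptote (rel. `W`) is closed. -/
lemma isClosed_of_not_hasAsymp {W : Submodule ℝ E} {F : Set E}
    (hFW : F ⊆ (W : Set E)) (h : ¬ HasAsymp W F) : IsClosed F := by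
  by_contra hncl
  have hsub : ¬ closure F ⊆ F := fun hh => hncl (isClosed_of_closure_subset hh)
  obtain ⟨p, hp, hpc⟩ := Set.not_subset.mp hsub
  obtain ⟨x, hxF, hxlim⟩ := mem_closure_iff_seq_limit.mp hp
  refine h ⟨p, ⊥, x, fun _ => p, ?_, bot_le, ?_, hxF, ?_, ?_⟩
  · have : IsClosed (W : Set E) := Submodule.closed_of_finiteDimensional W
    exact this.closure_subset_iff.mpr hFW hp
  · rintro z hz v hv rfl
    have : v = 0 := by simpa using hv
    exact hpc (by simpa [this] using hz)
  · exact fun k => ⟨0, Submodule.zero_mem _, by simp⟩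
  · simpa [tendsto_iff_norm_sub_tendsto_zero] using hxlim

/-- recession direction from an escaping sequence. -/
lemma recession {S : Set E} (hconv : Convex ℝ S) (hcl : IsClosed S) {x : ℕ → E}
    (hx : ∀ᶠ k in atTop, x k ∈ S)
    (hnorm : Tendsto (fun k => ‖x k‖) atTop atTop) {u : E}
    (hu : Tendsto (fun k => ‖x k‖⁻¹ • x k) atTop (𝓝 u)) :
    ∀ z ∈ S, ∀ t : ℝ, 0 ≤ t → z + t • u ∈ S := by
  intro z hz t ht
  have hmem : ∀ᶠ k in atTop, (1 - t / ‖x k‖) • z + (t / ‖x k‖) • x k ∈ S := by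
    filter_upwards [hx, hnorm.eventually_ge_atTop (t + 1)] with k hk hk1
    have h0 : 0 < ‖x k‖ := by linarith [ht]
    have h1 : t / ‖x k‖ ≤ 1 := by
      rw [div_le_one h0]; linarith
    exact hconv hz hk (sub_nonneg.mpr h1) (div_nonneg ht h0.le) (by ring)
  have hlim : Tendsto (fun k => (1 - t / ‖x k‖) • z + (t / ‖x k‖) • x k) atTop
      (𝓝 (z + t • u)) := by
    have h1 : Tendsto (fun k => t / ‖x k‖) atTop (𝓝 0) :=
      Tendsto.div_atTop tendsto_const_nhds hnorm
    have h2 : Tendsto (fun k => (1 - t / ‖x k‖) • z) atTop (𝓝 ((1 - (0:ℝ)) • z)) :=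
      (Tendsto.const_sub _ h1).smul_const z
    have h3 : Tendsto (fun k => (t / ‖x k‖) • x k) atTop (𝓝 (t • u)) := by
      have : ∀ᶠ k in atTop, (t / ‖x k‖) • x k = t • (‖x k‖⁻¹ • x k) := by
        filter_upwards [] with k
        rw [smul_smul, div_eq_mul_inv]
      rw [tendsto_congr' this]
      exact (hu.const_smul t)
    simpa using h2.add h3
  exact hcl.mem_of_tendsto hlim hmem

/-- linear bound forces nonpositive slope. -/
lemma slope_nonpos {a M : ℝ} (h : ∀ t : ℝ, 0 ≤ t → a * t ≤ M) : a ≤ 0 := by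
  by_contra hpos
  push_neg at hpos
  have ht : (0:ℝ) ≤ (|M| + 1) / a := by positivity
  have := h _ ht
  rw [mul_div_cancel₀ _ (ne_of_gt hpos)] at this
  have := abs_nonneg M
  have := le_abs_self M
  linarith

/-- a quadratic bounded on the nonnegative half-line has zero leading and linear coefficients. -/
lemma quad_bounded {c2 c1 lo hi : ℝ}
    (h : ∀ t : ℝ, 0 ≤ t → lo ≤ c2 * t ^ 2 + c1 * t ∧ c2 * t ^ 2 + c1 * t ≤ hi) :
    c2 = 0 ∧ c1 = 0 := by
  have hs : ∀ s : ℝ, 0 ≤ s → (2 * c2) * s^2 ≤ hi - 2 * lo := by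
    intro s hs
    have h1 := h s hs
    have h2 := h (2*s) (by linarith)
    nlinarith [h1.1, h1.2, h2.1, h2.2]
  have hc2le : c2 ≤ 0 := by
    by_contra hpos
    push_neg at hpos
    set M := hi - 2 * lo with hM
    have hM0 : 0 ≤ M := by have := hs 0 le_rfl; nlinarith
    set s := max 1 ((M + 1) / (2 * c2)) with hsdef
    have hs1 : (1:ℝ) ≤ s := le_max_left _ _
    have hs2 : (M + 1) / (2 * c2) ≤ s := le_max_right _ _
    have h2c2 : 0 < 2 * c2 := by linarith
    have : M + 1 ≤ (2 * c2) * s := by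
      rw [div_le_iff₀ h2c2] at hs2; linarith [hs2]
    have hfin := hs s (by linarith)
    nlinarith
  have hs' : ∀ s : ℝ, 0 ≤ s → (2 * (-c2)) * s^2 ≤ (-lo) - 2 * (-hi) := by
    intro s hss
    have := hs s hss
    have h1 := h s hss
    have h2 := h (2*s) (by linarith)
    nlinarith [h1.1, h1.2, h2.1, h2.2]
  have hc2ge : -c2 ≤ 0 := by
    by_contra hpos
    push_neg at hpos
    set M := (-lo) - 2 * (-hi) with hM
    have hM0 : 0 ≤ M := by have := hs' 0 le_rfl; nlinarith
    set s := max 1 ((M + 1) / (2 * (-c2))) with hsdef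
    have hs1 : (1:ℝ) ≤ s := le_max_left _ _
    have hs2 : (M + 1) / (2 * (-c2)) ≤ s := le_max_right _ _
    have h2c2 : 0 < 2 * (-c2) := by linarith
    have : M + 1 ≤ (2 * (-c2)) * s := by
      rw [div_le_iff₀ h2c2] at hs2; linarith [hs2]
    have hfin := hs' s (by linarith)
    nlinarith
  have hc2 : c2 = 0 := le_antisymm hc2le (by linarith)
  refine ⟨hc2, le_antisymm ?_ ?_⟩
  · refine slope_nonpos (a := c1) (M := hi) fun t ht => ?_
    have := (h t ht).2
    nlinarith
  · have : -c1 ≤ 0 := by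
      refine slope_nonpos (a := -c1) (M := -lo) fun t ht => ?_
      have := (h t ht).1
      nlinarith
    linarith





/-- orthogonal projection onto the hyperplane `u^⊥` as a linear map. -/
def proj (u : E) : E →ₗ[ℝ] E :=
  LinearMap.id - ((innerSL ℝ u).toLinearMap.smulRight u)

lemma proj_apply (u x : E) : proj u x = x - ⟪u, x⟫ • u := rfl

lemma inner_proj (u : E) (hu : ‖u‖ = 1) (x : E) : ⟪u, proj u x⟫ = 0 := by
  rw [proj_apply, inner_sub_right, real_inner_smul_right, real_inner_self_eq_norm_sq, hu]
  ring

lemma proj_of_inner_zero (u : E) {x : E} (hx : ⟪u, x⟫ = 0) : proj u x = x := by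
  rw [proj_apply, hx]; simp

lemma proj_add_smul (u : E) (hu : ‖u‖ = 1) (x : E) (t : ℝ) :
    proj u (x + t • u) = proj u x := by
  rw [proj_apply, proj_apply, inner_add_right, real_inner_smul_right,
    real_inner_self_eq_norm_sq, hu]
  simp only [one_pow, mul_one, add_smul, smul_add]
  abel

lemma norm_proj_le (u : E) (hu : ‖u‖ = 1) (x : E) : ‖proj u x‖ ≤ ‖x‖ := by
  have h1 : ‖proj u x‖ ^ 2 ≤ ‖x‖ ^ 2 := by
    rw [proj_apply, norm_sub_sq_real, real_inner_smul_right, norm_smul, real_inner_comm]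
    simp only [norm_smul, Real.norm_eq_abs, hu, mul_one]
    rw [sq_abs]
    nlinarith [sq_nonneg (⟪x, u⟫)]
  exact (pow_le_pow_iff_left₀ (norm_nonneg _) (norm_nonneg _) two_ne_zero).mp h1

/-- the space `V = W ⊓ u^⊥`. -/
def perpIn (W : Submodule ℝ E) (u : E) : Submodule ℝ E := W ⊓ (Submodule.span ℝ {u})ᗮ

lemma proj_mem_perpIn {W : Submodule ℝ E} {u : E} (hu : ‖u‖ = 1) (huW : u ∈ W)
    {x : E} (hx : x ∈ W) : proj u x ∈ perpIn W u := by
  refine Submodule.mem_inf.mpr ⟨W.sub_mem hx (W.smul_mem _ huW), ?_⟩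
  · rw [Submodule.mem_orthogonal]
    intro y hy
    obtain ⟨c, rfl⟩ := Submodule.mem_span_singleton.mp hy
    rw [real_inner_smul_left, inner_proj u hu x, mul_zero]

lemma perpIn_le (W : Submodule ℝ E) (u : E) : perpIn W u ≤ W := inf_le_left

lemma proj_eq_self_of_mem_perp {u : E} {x : E} (hx : x ∈ (Submodule.span ℝ {u})ᗮ) :
    proj u x = x := by
  apply proj_of_inner_zero
  have := (Submodule.mem_orthogonal _ _).mp hx u (Submodule.mem_span_singleton_self u)
  exact this

lemma finrank_perpIn_lt {W : Submodule ℝ E} {u : E} (hu : ‖u‖ = 1) (huW : u ∈ W) :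
    Module.finrank ℝ (perpIn W u) < Module.finrank ℝ W := by
  apply Submodule.finrank_lt_finrank_of_lt
  rw [lt_iff_le_and_ne]
  refine ⟨perpIn_le W u, fun h => ?_⟩
  have huV : u ∈ perpIn W u := by rw [h]; exact huW
  have := (Submodule.mem_orthogonal _ _).mp (Submodule.mem_inf.mp huV).2 u
    (Submodule.mem_span_singleton_self u)
  rw [real_inner_self_eq_norm_sq, hu] at this
  norm_num at this


lemma exists_direction {x : ℕ → E} (hnorm : Tendsto (fun k => ‖x k‖) atTop atTop) :
    ∃ (u : E) (ψ : ℕ → ℕ), ‖u‖ = 1 ∧ StrictMono ψ ∧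
      Tendsto (fun k => ‖x (ψ k)‖⁻¹ • x (ψ k)) atTop (𝓝 u) := by
  obtain ⟨N, hN⟩ := Filter.eventually_atTop.mp (hnorm.eventually_ge_atTop 1)
  set z : ℕ → E := fun k => ‖x (k + N)‖⁻¹ • x (k + N) with hz
  have hzs : ∀ k, z k ∈ Metric.sphere (0 : E) 1 := by
    intro k
    have h1 : (1:ℝ) ≤ ‖x (k + N)‖ := hN _ (Nat.le_add_left N k)
    rw [mem_sphere_zero_iff_norm, hz, norm_smul, norm_inv, norm_norm,
      inv_mul_cancel₀ (by linarith)]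
  obtain ⟨a, ha, φ, hφ, hconv⟩ := (isCompact_sphere (0:E) 1).tendsto_subseq hzs
  refine ⟨a, fun k => φ k + N, mem_sphere_zero_iff_norm.mp ha,
    fun k l hkl => by simpa using hφ hkl, hconv⟩

lemma hasAsymp_of_proj {W : Submodule ℝ E} {u : E} (hu : ‖u‖ = 1) (huW : u ∈ W)
    {F : Set E} (hFW : F ⊆ (W : Set E))
    (h : HasAsymp (perpIn W u) (proj u '' F)) : HasAsymp W F := by
  obtain ⟨a, U, x', b', haV, hUV, hdisj, hx'm, hb'm, hlim⟩ := h
  choose y hyF hyP using hx'm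
  choose v hvU hbv using hb'm
  have projU : ∀ w ∈ U, proj u w = w := fun w hw =>
    proj_eq_self_of_mem_perp (Submodule.mem_inf.mp (hUV hw)).2
  have proja : proj u a = a := proj_eq_self_of_mem_perp (Submodule.mem_inf.mp haV).2
  have projsu : ∀ c : ℝ, proj u (c • u) = 0 := by
    intro c
    rw [proj_apply, real_inner_smul_right, real_inner_self_eq_norm_sq, hu]
    simp [smul_smul]
  refine ⟨a, U ⊔ Submodule.span ℝ {u}, y, fun k => b' k + ⟪u, y k⟫ • u,
    perpIn_le W u haV,
    sup_le (hUV.trans (perpIn_le W u))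
      (Submodule.span_le.mpr (Set.singleton_subset_iff.mpr huW)),
    ?_, hyF, ?_, ?_⟩
  · rintro z hzF w hw heq
    obtain ⟨w₁, hw₁, w₂, hw₂, rfl⟩ := Submodule.mem_sup.mp hw
    obtain ⟨c, rfl⟩ := Submodule.mem_span_singleton.mp hw₂
    have hpz : proj u z = a + w₁ := by
      rw [heq, map_add, map_add, proja, projU w₁ hw₁, projsu, add_zero]
    exact hdisj (proj u z) ⟨z, hzF, rfl⟩ w₁ hw₁ hpz
  · intro k
    refine ⟨v k + ⟪u, y k⟫ • u, ?_, by
      show b' k + ⟪u, y k⟫ • u = a + (v k + ⟪u, y k⟫ • u)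
      rw [hbv k]; abel⟩
    exact Submodule.add_mem _ (Submodule.mem_sup_left (hvU k))
      (Submodule.mem_sup_right (Submodule.smul_mem _ _ (Submodule.mem_span_singleton_self u)))
  · have heq : (fun k => ‖y k - (b' k + ⟪u, y k⟫ • u)‖) = fun k => ‖x' k - b' k‖ := by
      funext k
      rw [← hyP k, proj_apply]
      congr 1
      abel
    rw [heq]
    exact hlim

lemma not_hasAsymp_of_qFW {F : Set E} (hF : IsQFWSet F) : ¬ HasAsymp ⊤ F := by
  rintro ⟨a, U, x, b, -, -, hdisj, hxF, hbm, hlim⟩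
  set R : E →ₗ[ℝ] E := LinearMap.id - (U.subtype.comp (U.orthogonalProjectionOnto).toLinearMap)
    with hRdef
  have hR : ∀ z, R z = z - (U.orthogonalProjectionOnto z : E) := fun z => rfl
  have hRU : ∀ w ∈ U, R w = 0 := by
    intro w hw
    rw [hR, sub_eq_zero, ← Submodule.starProjection_apply, Submodule.starProjection_eq_self_iff.mpr hw]
  have hRker : ∀ z, R z = 0 → z ∈ U := by
    intro z hz
    rw [hR, sub_eq_zero] at hz
    rw [hz]
    exact SetLike.coe_mem _
  have hRperp : ∀ z, R z ∈ Uᗮ := fun z => Submodule.sub_starProjection_mem_orthogonal z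
  have hRle : ∀ z, ‖R z‖ ≤ ‖z‖ := by
    intro z
    have hz : z = (U.orthogonalProjectionOnto z : E) + R z := by rw [hR]; abel
    have hperp : ⟪(U.orthogonalProjectionOnto z : E), R z⟫ = 0 :=
      (Submodule.mem_orthogonal _ _).mp (hRperp z) _ (SetLike.coe_mem _)
    have : ‖z‖ ^ 2 = ‖(U.orthogonalProjectionOnto z : E)‖ ^ 2 + ‖R z‖ ^ 2 := by
      conv_lhs => rw [hz]
      rw [norm_add_sq_real, hperp]
      ring
    refine (pow_le_pow_iff_left₀ (norm_nonneg _) (norm_nonneg _) two_ne_zero).mp ?_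
    nlinarith [sq_nonneg ‖(U.orthogonalProjectionOnto z : E)‖]
  set f : E → ℝ := fun z => ⟪R z - R a, R z - R a⟫ with hfdef
  have hfnorm : ∀ z, f z = ‖R z - R a‖ ^ 2 := fun z => real_inner_self_eq_norm_sq _
  have hfq : IsQuadratic f := by
    refine ⟨LinearMap.mk₂ ℝ (fun x y => ⟪R x, R y⟫)
      (fun m₁ m₂ n => by show ⟪R (m₁ + m₂), R n⟫ = ⟪R m₁, R n⟫ + ⟪R m₂, R n⟫
                         rw [map_add, inner_add_left])
      (fun c m n => by show ⟪R (c • m), R n⟫ = c • ⟪R m, R n⟫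
                       rw [map_smul, real_inner_smul_left]; rfl)
      (fun m n₁ n₂ => by show ⟪R m, R (n₁ + n₂)⟫ = ⟪R m, R n₁⟫ + ⟪R m, R n₂⟫
                         rw [map_add, inner_add_right])
      (fun c m n => by show ⟪R m, R (c • n)⟫ = c • ⟪R m, R n⟫
                       rw [map_smul, real_inner_smul_right]; rfl),
      (-(2:ℝ)) • ((innerSL ℝ (R a)).toLinearMap.comp R), ⟪R a, R a⟫, ?_⟩
    intro z
    simp only [LinearMap.mk₂_apply, LinearMap.smul_apply, LinearMap.coe_comp,
      Function.comp_apply, ContinuousLinearMap.coe_coe, innerSL_apply_apply, smul_eq_mul]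
    rw [hfdef]
    simp only []
    rw [inner_sub_left, inner_sub_right, inner_sub_right]
    rw [real_inner_comm (R z) (R a)]
    ring
  have hconv : ∀ α : ℝ, Convex ℝ {x ∈ F | f x ≤ α} := by
    intro α
    have hset : {x ∈ F | f x ≤ α} = F ∩ (⇑R ⁻¹' {w | ‖w - R a‖ ^ 2 ≤ α}) := by
      ext z
      simp [hfnorm z]
    rw [hset]
    refine hF.1.inter (Convex.linear_preimage ?_ R)
    rcases le_or_gt 0 α with hα | hα
    · have : {w : E | ‖w - R a‖ ^ 2 ≤ α} = Metric.closedBall (R a) (Real.sqrt α) := by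
        ext w
        rw [Metric.mem_closedBall, dist_eq_norm, Set.mem_setOf_eq,
          ← Real.le_sqrt (norm_nonneg _) hα]
      rw [this]
      exact convex_closedBall _ _
    · have : {w : E | ‖w - R a‖ ^ 2 ≤ α} = ∅ := by
        ext w
        simp only [Set.mem_setOf_eq, Set.mem_empty_iff_false, iff_false, not_le]
        exact lt_of_lt_of_le hα (sq_nonneg _)
      rw [this]
      exact convex_empty
  have hbdd : BddBelow (f '' F) := by
    refine ⟨0, ?_⟩
    rintro w ⟨z, hz, rfl⟩
    rw [hfnorm]
    positivity
  obtain ⟨x₀, hx₀F, hmin⟩ := hF.2 f hfq hconv hbdd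
  have hfx₀pos : 0 < f x₀ := by
    rcases lt_or_eq_of_le (by rw [hfnorm]; positivity : (0:ℝ) ≤ f x₀) with h | h
    · exact h
    · exfalso
      have : R x₀ - R a = 0 := inner_self_eq_zero.mp h.symm
      have hU : x₀ - a ∈ U := hRker _ (by rw [map_sub]; exact this)
      exact hdisj x₀ hx₀F (x₀ - a) hU (by abel)
  have hfxk : ∀ k, f (x k) ≤ ‖x k - b k‖ ^ 2 := by
    intro k
    obtain ⟨v, hv, hbk⟩ := hbm k
    have : R (x k) - R a = R (x k - b k) := by
      rw [map_sub, hbk, map_add, hRU v hv, add_zero]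
    rw [hfnorm, this]
    exact pow_le_pow_left₀ (norm_nonneg _) (hRle _) 2
  have hsq : Tendsto (fun k => ‖x k - b k‖ ^ 2) atTop (𝓝 0) := by
    have := hlim.pow 2
    simpa using this
  obtain ⟨k, hk⟩ := (hsq.eventually (eventually_lt_nhds hfx₀pos)).exists
  exact absurd (hmin (x k) (hxF k)) (not_le.mpr (lt_of_le_of_lt (hfxk k) hk))

lemma not_hasAsymp_iInter (N : ℕ) :
    ∀ (W : Submodule ℝ E), Module.finrank ℝ W ≤ N →
    ∀ (m : ℕ) (F : Fin m → Set E), (∀ i, F i ⊆ (W : Set E)) → (∀ i, Convex ℝ (F i)) →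
    (∀ i, ¬ HasAsymp W (F i)) → (⋂ i, F i).Nonempty → ¬ HasAsymp W (⋂ i, F i) := by
  induction N using Nat.strong_induction_on with
  | _ N IH =>
  intro W hWN m F hFW hFc hFna hne hA
  obtain ⟨a, U, x, b, haW, hUW, hdisj, hxF, hbm, hlim⟩ := hA
  rcases Nat.eq_zero_or_pos m with hm | hm
  · subst hm
    exact hdisj a (Set.mem_iInter.mpr (fun i => i.elim0)) 0 (Submodule.zero_mem U) (by simp)
  have hFcl : ∀ i, IsClosed (F i) := fun i => isClosed_of_not_hasAsymp (hFW i) (hFna i)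
  have hIcl : IsClosed (⋂ i, F i) := isClosed_iInter fun i => hFcl i
  have hUcl : IsClosed (U : Set E) := U.closed_of_finiteDimensional
  choose v hvU hbv using hbm
  by_cases hbig : Tendsto (fun k => ‖x k‖) atTop atTop
  · -- escaping case
    obtain ⟨u, ψ, hu1, hψmono, hdir⟩ := exists_direction hbig
    have hξtop : Tendsto ψ atTop atTop := hψmono.tendsto_atTop
    have hnormψ : Tendsto (fun k => ‖x (ψ k)‖) atTop atTop := hbig.comp hξtop
    have hlimψ : Tendsto (fun k => ‖x (ψ k) - b (ψ k)‖) atTop (𝓝 0) := by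
      have := hlim.comp hξtop
      exact this
    have hrec : ∀ i, ∀ z ∈ F i, ∀ t : ℝ, 0 ≤ t → z + t • u ∈ F i := fun i =>
      recession (hFc i) (hFcl i)
        (Filter.Eventually.of_forall fun k => (Set.mem_iInter.mp (hxF (ψ k)) i)) hnormψ hdir
    have hinv : Tendsto (fun k => ‖x (ψ k)‖⁻¹) atTop (𝓝 0) :=
      tendsto_inv_atTop_zero.comp hnormψ
    have hbound : Tendsto (fun k => ‖x (ψ k)‖⁻¹ * (‖x (ψ k) - b (ψ k)‖ + ‖a‖)) atTop
        (𝓝 (0 * (0 + ‖a‖))) := hinv.mul (hlimψ.add tendsto_const_nhds)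
    have hdiffn : Tendsto
        (fun k => ‖(‖x (ψ k)‖⁻¹ • (b (ψ k) - a)) - (‖x (ψ k)‖⁻¹ • x (ψ k))‖) atTop (𝓝 0) := by
      refine squeeze_zero (fun k => norm_nonneg _) (fun k => ?_) (by simpa using hbound)
      rw [← smul_sub, norm_smul, norm_inv, norm_norm]
      have h1 : ‖b (ψ k) - a - x (ψ k)‖ ≤ ‖x (ψ k) - b (ψ k)‖ + ‖a‖ := by
        have : b (ψ k) - a - x (ψ k) = -((x (ψ k) - b (ψ k)) + a) := by abel
        rw [this, norm_neg]
        exact norm_add_le _ _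
      exact mul_le_mul_of_nonneg_left h1 (inv_nonneg.mpr (norm_nonneg _))
    have hvlim : Tendsto (fun k => ‖x (ψ k)‖⁻¹ • (b (ψ k) - a)) atTop (𝓝 u) := by
      have hD : Tendsto
          (fun k => (‖x (ψ k)‖⁻¹ • (b (ψ k) - a)) - (‖x (ψ k)‖⁻¹ • x (ψ k))) atTop (𝓝 0) :=
        tendsto_zero_iff_norm_tendsto_zero.mpr hdiffn
      have := hdir.add hD
      simp only [add_zero] at this
      have heq : (fun k => ‖x (ψ k)‖⁻¹ • x (ψ k) +
          ((‖x (ψ k)‖⁻¹ • (b (ψ k) - a)) - (‖x (ψ k)‖⁻¹ • x (ψ k)))) =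
          fun k => ‖x (ψ k)‖⁻¹ • (b (ψ k) - a) := by
        funext k; abel
      rwa [heq] at this
    have huU : u ∈ U := by
      refine hUcl.mem_of_tendsto hvlim (Filter.Eventually.of_forall fun k => ?_)
      have hb : b (ψ k) - a = v (ψ k) := by rw [hbv (ψ k)]; abel
      rw [hb]
      exact U.smul_mem _ (hvU (ψ k))
    have huW : u ∈ W := hUW huU
    set V := perpIn W u with hV
    set P := proj u with hP
    set G : Fin m → Set E := fun i => P '' F i with hG
    have hGW : ∀ i, G i ⊆ (V : Set E) := by
      rintro i _ ⟨z, hz, rfl⟩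
      exact proj_mem_perpIn hu1 huW (hFW i hz)
    have hGc : ∀ i, Convex ℝ (G i) := fun i => (hFc i).linear_image P
    have hGna : ∀ i, ¬ HasAsymp V (G i) := fun i hGA =>
      (hFna i) (hasAsymp_of_proj hu1 huW (hFW i) hGA)
    obtain ⟨p₀, hp₀⟩ := hne
    have hGne : (⋂ i, G i).Nonempty :=
      ⟨P p₀, Set.mem_iInter.mpr fun i => ⟨p₀, Set.mem_iInter.mp hp₀ i, rfl⟩⟩
    have hVrank : Module.finrank ℝ V < Module.finrank ℝ W := finrank_perpIn_lt hu1 huW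
    refine IH (Module.finrank ℝ V) (lt_of_lt_of_le hVrank hWN) V le_rfl m G hGW hGc hGna hGne
      ⟨P a, U.map P, fun k => P (x (ψ k)), fun k => P (b (ψ k)),
        proj_mem_perpIn hu1 huW haW, ?_, ?_, ?_, ?_, ?_⟩
    · rintro _ ⟨w, hw, rfl⟩
      exact proj_mem_perpIn hu1 huW (hUW hw)
    · rintro z hzG w hwm heq
      obtain ⟨w₀, hw₀U, rfl⟩ := hwm
      choose xi hxiF hxiP using fun i => (Set.mem_iInter.mp hzG i)
      have hmne : Nonempty (Fin m) := ⟨⟨0, hm⟩⟩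
      have hune : (Finset.univ : Finset (Fin m)).Nonempty := Finset.univ_nonempty
      set s := Finset.univ.sup' hune (fun i => ⟪u, xi i⟫) with hs
      have hxieq : ∀ i, xi i = z + ⟪u, xi i⟫ • u := by
        intro i
        have := hxiP i
        rw [hP] at this
        rw [proj_apply] at this
        rw [← this]
        abel
      have hzmem : ∀ i, z + s • u ∈ F i := by
        intro i
        obtain ⟨c, hc, hcs⟩ : ∃ c : ℝ, xi i = z + c • u ∧ c ≤ s :=
          ⟨⟪u, xi i⟫, hxieq i,
            Finset.le_sup' (fun j => ⟪u, xi j⟫) (Finset.mem_univ i)⟩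
        have h1 : z + s • u = xi i + (s - c) • u := by
          rw [hc, sub_smul]; abel
        rw [h1]
        exact hrec i (xi i) (hxiF i) _ (sub_nonneg.mpr hcs)
      have hzflat : z + s • u = a + (w₀ + (s - ⟪u, a⟫ - ⟪u, w₀⟫) • u) := by
        rw [heq, hP, proj_apply, proj_apply, sub_smul, sub_smul]
        abel
      refine hdisj (z + s • u) (Set.mem_iInter.mpr hzmem)
        (w₀ + (s - ⟪u, a⟫ - ⟪u, w₀⟫) • u) ?_ hzflat
      exact U.add_mem hw₀U (U.smul_mem _ huU)
    · intro k
      exact Set.mem_iInter.mpr fun i => ⟨x (ψ k), Set.mem_iInter.mp (hxF (ψ k)) i, rfl⟩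
    · intro k
      refine ⟨P (v (ψ k)), Submodule.mem_map_of_mem (hvU (ψ k)), ?_⟩
      show P (b (ψ k)) = P a + P (v (ψ k))
      rw [hbv (ψ k), map_add]
    · refine squeeze_zero (fun k => norm_nonneg _) (fun k => ?_) hlimψ
      rw [← map_sub]
      exact norm_proj_le u hu1 _
  · -- bounded subsequence case
    rw [tendsto_atTop] at hbig
    push_neg at hbig
    obtain ⟨C, hC⟩ := hbig
    have hC' : ∃ᶠ k in atTop, ‖x k‖ ≤ C := hC.mono (fun k hk => hk.le)
    obtain ⟨φ, hφmono, hφC⟩ := Filter.extraction_of_frequently_atTop hC'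
    have hcb : ∀ k, x (φ k) ∈ Metric.closedBall (0 : E) C := by
      intro k
      rw [Metric.mem_closedBall, dist_zero_right]
      exact hφC k
    obtain ⟨z, _, χ, hχmono, hzt⟩ :=
      (isCompact_closedBall (0:E) C).tendsto_subseq hcb
    have hξmono : StrictMono (φ ∘ χ) := hφmono.comp hχmono
    have hξtop : Tendsto (φ ∘ χ) atTop atTop := hξmono.tendsto_atTop
    have hzF : z ∈ ⋂ i, F i := by
      refine hIcl.mem_of_tendsto hzt (Filter.Eventually.of_forall fun k => ?_)
      exact hxF _
    have hxb0 : Tendsto (fun k => x (φ (χ k)) - b (φ (χ k))) atTop (𝓝 0) := by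
      apply tendsto_zero_iff_norm_tendsto_zero.mpr
      exact hlim.comp hξtop
    have hbz : Tendsto (fun k => b (φ (χ k))) atTop (𝓝 z) := by
      have h2 := hzt.sub hxb0
      simp only [Function.comp_apply, sub_zero, sub_sub_cancel] at h2
      exact h2
    have hvz : Tendsto (fun k => b (φ (χ k)) - a) atTop (𝓝 (z - a)) := hbz.sub_const a
    have hza : z - a ∈ U := by
      refine hUcl.mem_of_tendsto hvz (Filter.Eventually.of_forall fun k => ?_)
      have hb : b (φ (χ k)) - a = v (φ (χ k)) := by rw [hbv]; abel
      rw [hb]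
      exact hvU _
    exact hdisj z hzF (z - a) hza (by abel)

lemma quadratic_continuous {f : E → ℝ} (hfq : IsQuadratic f) : Continuous f := by
  obtain ⟨B, l, c, hf⟩ := hfq
  have hfe : f = fun x => B x x + l x + c := funext hf
  rw [hfe]
  set T : E →ₗ[ℝ] (E →L[ℝ] ℝ) :=
    (LinearMap.toContinuousLinearMap : (E →ₗ[ℝ] ℝ) ≃ₗ[ℝ] (E →L[ℝ] ℝ)).toLinearMap.comp B with hT
  have hTc : Continuous T := T.continuous_of_finiteDimensional
  have happ : Continuous fun p : (E →L[ℝ] ℝ) × E => p.1 p.2 :=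
    isBoundedBilinearMap_apply.continuous
  have hBc : Continuous fun x => B x x := by
    have : Continuous fun x => (T x) x := happ.comp (hTc.prodMk continuous_id)
    convert this using 2; rfl
  exact (hBc.add l.continuous_of_finiteDimensional).add continuous_const

lemma attains_min (N : ℕ) :
    ∀ (W : Submodule ℝ E), Module.finrank ℝ W ≤ N →
    ∀ (F : Set E), F ⊆ (W : Set E) → Convex ℝ F → F.Nonempty → ¬ HasAsymp W F →
    ∀ f : E → ℝ, IsQuadratic f → (∀ α : ℝ, Convex ℝ {x ∈ F | f x ≤ α}) →
    BddBelow (f '' F) → ∃ x₀ ∈ F, ∀ x ∈ F, f x₀ ≤ f x := by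
  induction N using Nat.strong_induction_on with
  | _ N IH =>
  intro W hWN F hFW hFc hFne hFna f hfq hql hbdd
  have hfc : Continuous f := quadratic_continuous hfq
  obtain ⟨B, l, c, hf⟩ := hfq
  have hFcl : IsClosed F := isClosed_of_not_hasAsymp hFW hFna
  set μ := sInf (f '' F) with hμ
  have hμle : ∀ x ∈ F, μ ≤ f x := fun x hx => csInf_le hbdd ⟨x, hx, rfl⟩
  have hclS : ∀ β : ℝ, IsClosed {x ∈ F | f x ≤ β} := by
    intro β
    have hSeq : {x ∈ F | f x ≤ β} = F ∩ f ⁻¹' Set.Iic β := by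
      ext z; simp [Set.mem_sep_iff]
    rw [hSeq]
    exact hFcl.inter (IsClosed.preimage hfc isClosed_Iic)
  by_cases hcp : ∃ β, μ < β ∧ Bornology.IsBounded {x ∈ F | f x ≤ β}
  · obtain ⟨β, hβμ, hβb⟩ := hcp
    have hSne : {x ∈ F | f x ≤ β}.Nonempty := by
      obtain ⟨y, ⟨z, hz, rfl⟩, hy⟩ := exists_lt_of_csInf_lt (hFne.image f) hβμ
      exact ⟨z, hz, hy.le⟩
    have hScp : IsCompact {x ∈ F | f x ≤ β} :=
      Metric.isCompact_of_isClosed_isBounded (hclS β) hβb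
    obtain ⟨x₀, hx₀S, hmin⟩ := hScp.exists_isMinOn hSne hfc.continuousOn
    refine ⟨x₀, hx₀S.1, fun z hz => ?_⟩
    by_cases hzβ : f z ≤ β
    · exact hmin (⟨hz, hzβ⟩ : z ∈ {x ∈ F | f x ≤ β})
    · exact le_trans hx₀S.2 (le_of_not_ge hzβ)
  · push_neg at hcp
    have hseq : ∀ k : ℕ, ∃ z, (z ∈ F ∧ f z ≤ μ + 1/((k:ℝ)+1)) ∧ (k:ℝ) < ‖z‖ := by
      intro k
      have h1 : μ < μ + 1/((k:ℝ)+1) := by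
        have : (0:ℝ) < 1/((k:ℝ)+1) := by positivity
        linarith
      have h2 := hcp _ h1
      rw [isBounded_iff_forall_norm_le] at h2
      push_neg at h2
      obtain ⟨z, hz, hzk⟩ := h2 k
      exact ⟨z, hz, hzk⟩
    choose x hxm hxnorm using hseq
    have hxF : ∀ k, x k ∈ F := fun k => (hxm k).1
    have hnormtop : Tendsto (fun k => ‖x k‖) atTop atTop :=
      tendsto_atTop_mono (fun k => (hxnorm k).le) tendsto_natCast_atTop_atTop
    obtain ⟨u, ψ, hu1, hψmono, hdir⟩ := exists_direction hnormtop
    have hψtop : Tendsto ψ atTop atTop := hψmono.tendsto_atTop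
    have hnormψ : Tendsto (fun k => ‖x (ψ k)‖) atTop atTop := hnormtop.comp hψtop
    have hWcl : IsClosed (W : Set E) := W.closed_of_finiteDimensional
    have huW : u ∈ W := by
      refine hWcl.mem_of_tendsto hdir (Filter.Eventually.of_forall fun k => ?_)
      exact SetLike.mem_coe.mpr (W.smul_mem _ (hFW (hxF (ψ k))))
    have hrecS : ∀ β : ℝ, μ < β → ∀ z ∈ F, f z ≤ β → ∀ t : ℝ, 0 ≤ t →
        z + t • u ∈ F ∧ f (z + t • u) ≤ β := by
      intro β hβ
      have h1k : Tendsto (fun k : ℕ => μ + 1/((k:ℝ)+1)) atTop (𝓝 (μ + 0)) :=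
        tendsto_const_nhds.add tendsto_one_div_add_atTop_nhds_zero_nat
      rw [add_zero] at h1k
      have hev : ∀ᶠ k : ℕ in atTop, μ + 1/((k:ℝ)+1) < β := h1k.eventually_lt_const hβ
      have hmem : ∀ᶠ k in atTop, x (ψ k) ∈ {x ∈ F | f x ≤ β} := by
        filter_upwards [hev] with k hk
        refine ⟨hxF (ψ k), le_trans (hxm (ψ k)).2 ?_⟩
        have hkψ : (k:ℝ) ≤ (ψ k : ℝ) := Nat.cast_le.mpr (hψmono.le_apply)
        have : 1/((ψ k : ℝ)+1) ≤ 1/((k:ℝ)+1) := by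
          apply one_div_le_one_div_of_le
          · positivity
          · linarith
        linarith
      have hr := recession (hql β) (hclS β) hmem hnormψ hdir
      intro z hz hfz t ht
      exact (hr z ⟨hz, hfz⟩ t ht : _)
    set g : E → ℝ := fun z => B z u + B u z + l u with hgdef
    have hexp : ∀ z, ∀ t : ℝ, f (z + t • u) = f z + t * (g z) + t^2 * (B u u) := by
      intro z t
      rw [hf, hf]
      simp only [map_add, map_smul, LinearMap.add_apply, LinearMap.smul_apply, smul_eq_mul,
        hgdef]
      ring
    have hkey : ∀ z ∈ F, B u u = 0 ∧ g z = 0 := by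
      intro z hz
      set β := max (f z) (μ + 1) with hβdef
      have hβμ : μ < β := lt_of_lt_of_le (lt_add_one μ) (le_max_right _ _)
      have hzS : f z ≤ β := le_max_left _ _
      have hb := hrecS β hβμ z hz hzS
      refine quad_bounded (c2 := B u u) (c1 := g z) (lo := μ - f z) (hi := β - f z) ?_
      intro t ht
      have hm := hb t ht
      have h3 := hμle _ hm.1
      have h4 := hm.2
      rw [hexp] at h3 h4
      constructor <;> nlinarith
    obtain ⟨p₁, hp₁⟩ := hFne
    have hBuu : B u u = 0 := (hkey p₁ hp₁).1
    have hg0 : ∀ z ∈ F, g z = 0 := fun z hz => (hkey z hz).2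
    have hfP : ∀ z ∈ F, f (proj u z) = f z := by
      intro z hz
      have h1 : proj u z = z + (-⟪u, z⟫) • u := by
        rw [proj_apply, neg_smul]; abel
      rw [h1, hexp, hBuu, hg0 z hz]
      ring
    set V := perpIn W u with hV
    set F' := ⇑(proj u) '' F with hF'
    have hF'V : F' ⊆ (V : Set E) := by
      rintro _ ⟨z, hz, rfl⟩
      exact proj_mem_perpIn hu1 huW (hFW hz)
    have hF'c : Convex ℝ F' := hFc.linear_image _
    have hF'ne : F'.Nonempty := ⟨proj u p₁, p₁, hp₁, rfl⟩
    have hF'na : ¬ HasAsymp V F' := fun h => hFna (hasAsymp_of_proj hu1 huW hFW h)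
    have hql' : ∀ α : ℝ, Convex ℝ {p ∈ F' | f p ≤ α} := by
      intro α
      have hSeq : {p ∈ F' | f p ≤ α} = ⇑(proj u) '' {z ∈ F | f z ≤ α} := by
        ext p
        constructor
        · rintro ⟨⟨z, hz, rfl⟩, hfp⟩
          exact ⟨z, ⟨hz, by rwa [hfP z hz] at hfp⟩, rfl⟩
        · rintro ⟨z, ⟨hz, hfz⟩, rfl⟩
          exact ⟨⟨z, hz, rfl⟩, by rwa [hfP z hz]⟩
      rw [hSeq]
      exact (hql α).linear_image _
    have himg : f '' F' = f '' F := by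
      ext y
      constructor
      · rintro ⟨p, ⟨z, hz, rfl⟩, rfl⟩
        exact ⟨z, hz, (hfP z hz).symm⟩
      · rintro ⟨z, hz, rfl⟩
        exact ⟨proj u z, ⟨z, hz, rfl⟩, hfP z hz⟩
    have hbdd' : BddBelow (f '' F') := himg ▸ hbdd
    have hVrank := finrank_perpIn_lt hu1 huW
    obtain ⟨p₀, hp₀F', hmin'⟩ := IH (Module.finrank ℝ V) (lt_of_lt_of_le hVrank hWN) V le_rfl
      F' hF'V hF'c hF'ne hF'na f ⟨B, l, c, hf⟩ hql' hbdd'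
    obtain ⟨z₀, hz₀F, hz₀P⟩ := hp₀F'
    refine ⟨z₀, hz₀F, fun z hz => ?_⟩
    have h1 : f z₀ = f p₀ := by rw [← hz₀P]; exact (hfP z₀ hz₀F).symm
    rw [h1]
    have h2 := hmin' (proj u z) ⟨z, hz, rfl⟩
    rwa [hfP z hz] at h2

end QFWAux

theorem qFW_finite_intersection {n m : ℕ}
    (F : Fin m → Set (EuclideanSpace ℝ (Fin n)))
    (hF : ∀ i, IsQFWSet (F i)) (hne : (⋂ i, F i).Nonempty) :
    IsQFWSet (⋂ i, F i) := by
  classical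
  have hsub : ∀ i, F i ⊆ ((⊤ : Submodule ℝ (EuclideanSpace ℝ (Fin n))) : Set _) := by
    intro i x _
    simp
  have hconv : Convex ℝ (⋂ i, F i) := convex_iInter fun i => (hF i).1
  refine ⟨hconv, ?_⟩
  intro f hfq hql hbdd
  have hna : ¬ QFWAux.HasAsymp (⊤ : Submodule ℝ (EuclideanSpace ℝ (Fin n))) (⋂ i, F i) :=
    QFWAux.not_hasAsymp_iInter
      (Module.finrank ℝ (⊤ : Submodule ℝ (EuclideanSpace ℝ (Fin n)))) ⊤ le_rfl m F
      hsub (fun i => (hF i).1) (fun i => QFWAux.not_hasAsymp_of_qFW (hF i)) hne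
  exact QFWAux.attains_min
    (Module.finrank ℝ (⊤ : Submodule ℝ (EuclideanSpace ℝ (Fin n)))) ⊤ le_rfl (⋂ i, F i)
    (by intro x _; simp) hconv hne hna f hfq hql hbdd
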